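/- Under Rayleigh fading (|h|² exponential with mean 1) with ρ = P_x/P_w ≥ 1 and κ = max{P_x/P_w, P_s/P_w, 1}, the capacity gap satisfies log₂((1/ρ + 1) · E[1/(|h|² + 1/(P_x/P_w + P_s/P_w))]) < 1.48 + log₂(log₂(1 + κ)). -/

import Mathlib

open MeasureTheory Real Set

private lemma ray_integrableOn (a : ℝ) (ha : 0 < a) :
    IntegrableOn (fun x : ℝ => (1 / (x + a)) * Real.exp (-x)) (Ioi 0) := by
  have hg : IntegrableOn (fun x : ℝ => a⁻¹ * Real.exp (-x)) (Ioi 0) := by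
    have h := (exp_neg_integrableOn_Ioi 0 (b := 1) one_pos).const_mul a⁻¹
    simpa [IntegrableOn] using h
  have hc : ContinuousOn (fun x : ℝ => (1 / (x + a)) * Real.exp (-x)) (Ioi 0) := by
    apply ContinuousOn.mul
    · exact ContinuousOn.div continuousOn_const
        ((continuous_id.add continuous_const).continuousOn)
        (fun x hx => by have : (0:ℝ) < x := hx; positivity)
    · exact (Real.continuous_exp.comp continuous_neg).continuousOn
  refine Integrable.mono hg (hc.aestronglyMeasurable measurableSet_Ioi) ?_
  filter_upwards [ae_restrict_mem measurableSet_Ioi] with x hx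
  have hx0 : (0:ℝ) < x := hx
  have hxa : 0 < x + a := by linarith
  rw [Real.norm_eq_abs, Real.norm_eq_abs, abs_of_nonneg (by positivity),
    abs_of_nonneg (by positivity)]
  have h1 : 1 / (x + a) ≤ a⁻¹ := by
    rw [one_div]
    exact inv_anti₀ ha (by linarith)
  exact mul_le_mul_of_nonneg_right h1 (Real.exp_pos _).le

private lemma ray_integral_le (a : ℝ) (ha : 0 < a) :
    (∫ x in Ioi (0:ℝ), (1 / (x + a)) * Real.exp (-x)) ≤ Real.log ((1 + a) / a) := by
  set f : ℝ → ℝ := fun x => (1 / (x + a)) * Real.exp (-x) with hf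
  have hInt := ray_integrableOn a ha
  have hIoc : IntegrableOn f (Ioc 0 1) := hInt.mono_set Ioc_subset_Ioi_self
  have hIoi1 : IntegrableOn f (Ioi 1) := hInt.mono_set (Ioi_subset_Ioi zero_le_one)
  have hsplit : (∫ x in Ioi (0:ℝ), f x)
      = (∫ x in Ioc (0:ℝ) 1, f x) + ∫ x in Ioi (1:ℝ), f x := by
    rw [← setIntegral_union (Ioc_disjoint_Ioi le_rfl) measurableSet_Ioi hIoc hIoi1,
      Ioc_union_Ioi_eq_Ioi zero_le_one]
  have htail : (∫ x in Ioi (1:ℝ), f x) ≤ (1 / (1 + a)) * Real.exp (-1) := by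
    have hgint : IntegrableOn (fun x : ℝ => (1 / (1 + a)) * Real.exp (-x)) (Ioi 1) := by
      have h := (exp_neg_integrableOn_Ioi 1 (b := 1) one_pos).const_mul (1 / (1 + a))
      simpa [IntegrableOn] using h
    have heq : (∫ x in Ioi (1:ℝ), (1 / (1 + a)) * Real.exp (-x))
        = (1 / (1 + a)) * Real.exp (-1) := by
      rw [MeasureTheory.integral_const_mul, integral_exp_neg_Ioi]
    rw [← heq]
    refine setIntegral_mono_on hIoi1 hgint measurableSet_Ioi ?_
    intro x hx
    have hx1 : (1:ℝ) < x := hx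
    have hxa : (0:ℝ) < 1 + a := by linarith
    refine mul_le_mul_of_nonneg_right ?_ (Real.exp_pos _).le
    rw [one_div, one_div]
    exact inv_anti₀ hxa (by linarith)
  have hhead : (∫ x in Ioc (0:ℝ) 1, f x)
      ≤ Real.log ((1 + a) / a) - (1 / (1 + a)) * Real.exp (-1) := by
    set g : ℝ → ℝ := fun x => 1 / (x + a) - (1 - Real.exp (-x)) * (1 / (1 + a)) with hgdef
    have hgc : ContinuousOn g (Icc 0 1) := by
      apply ContinuousOn.sub
      · exact ContinuousOn.div continuousOn_const
          ((continuous_id.add continuous_const).continuousOn)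
          (fun x hx => by have := hx.1; positivity)
      · exact (((continuous_const.sub (Real.continuous_exp.comp continuous_neg)).mul continuous_const)).continuousOn
    have hgint : IntegrableOn g (Ioc 0 1) :=
      (hgc.integrableOn_compact isCompact_Icc).mono_set Ioc_subset_Icc_self
    have hle : ∀ x ∈ Ioc (0:ℝ) 1, f x ≤ g x := by
      intro x hx
      have hx0 : (0:ℝ) < x := hx.1
      have hx1 : x ≤ 1 := hx.2
      have hxa : 0 < x + a := by linarith
      have h1a : 0 < 1 + a := by linarith
      have he : 0 ≤ 1 - Real.exp (-x) := by
        have : Real.exp (-x) ≤ 1 := Real.exp_le_one_iff.mpr (by linarith)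
        linarith
      have h2 : (1 - Real.exp (-x)) * (1 / (1 + a))
          ≤ (1 - Real.exp (-x)) * (1 / (x + a)) := by
        refine mul_le_mul_of_nonneg_left ?_ he
        rw [one_div, one_div]
        exact inv_anti₀ hxa (by linarith)
      have heq : f x = 1 / (x + a) - (1 - Real.exp (-x)) * (1 / (x + a)) := by
        simp only [hf]; ring
      rw [heq, hgdef]
      linarith
    have hmono := setIntegral_mono_on hIoc hgint measurableSet_Ioc hle
    refine hmono.trans (le_of_eq ?_)
    rw [← intervalIntegral.integral_of_le zero_le_one]
    have ha1 : (0:ℝ) < 1 + a := by linarith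
    have i1 : IntervalIntegrable (fun x : ℝ => 1 / (x + a)) volume 0 1 := by
      apply ContinuousOn.intervalIntegrable
      rw [uIcc_of_le zero_le_one]
      exact ContinuousOn.div continuousOn_const
        ((continuous_id.add continuous_const).continuousOn)
        (fun x hx => by have := hx.1; positivity)
    have i2 : IntervalIntegrable
        (fun x : ℝ => (1 - Real.exp (-x)) * (1 / (1 + a))) volume 0 1 :=
      Continuous.intervalIntegrable
        ((continuous_const.sub (Real.continuous_exp.comp continuous_neg)).mul
          continuous_const) 0 1
    have e1 : (∫ x in (0:ℝ)..1, 1 / (x + a)) = Real.log ((1 + a) / a) := by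
      have h := intervalIntegral.integral_comp_add_right
        (a := (0:ℝ)) (b := 1) (f := fun x : ℝ => 1 / x) a
      rw [h, zero_add, integral_one_div]
      intro hmem
      rw [uIcc_of_le (by linarith)] at hmem
      exact absurd hmem.1 (by linarith)
    have e2 : (∫ x in (0:ℝ)..1, (1 - Real.exp (-x)) * (1 / (1 + a)))
        = Real.exp (-1) * (1 / (1 + a)) := by
      rw [intervalIntegral.integral_mul_const]
      congr 1
      have hexp : (∫ x in (0:ℝ)..1, Real.exp (-x)) = 1 - Real.exp (-1) := by
        have h := intervalIntegral.integral_comp_neg (a := (0:ℝ)) (b := 1)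
          (f := fun x : ℝ => Real.exp x)
        rw [h, neg_zero, integral_exp, Real.exp_zero]
      have hone : IntervalIntegrable (fun _ : ℝ => (1:ℝ)) volume 0 1 :=
        intervalIntegrable_const
      have hexpint : IntervalIntegrable (fun x : ℝ => Real.exp (-x)) volume 0 1 :=
        Continuous.intervalIntegrable (Real.continuous_exp.comp continuous_neg) 0 1
      rw [intervalIntegral.integral_sub hone hexpint, hexp]
      simp
    rw [intervalIntegral.integral_sub i1 i2, e1, e2]
    ring
  rw [hsplit]
  linarith

private lemma ray_integral_pos (a : ℝ) (ha : 0 < a) :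
    0 < ∫ x in Ioi (0:ℝ), (1 / (x + a)) * Real.exp (-x) := by
  set f : ℝ → ℝ := fun x => (1 / (x + a)) * Real.exp (-x) with hf
  have hInt := ray_integrableOn a ha
  have hIoc : IntegrableOn f (Ioc 0 1) := hInt.mono_set Ioc_subset_Ioi_self
  have h1a : (0:ℝ) < 1 + a := by linarith
  have hconst : (∫ x in Ioc (0:ℝ) 1, (1 / (1 + a)) * Real.exp (-1))
      = (1 / (1 + a)) * Real.exp (-1) := by
    rw [setIntegral_const]
    simp [Real.volume_Ioc]
  have hge : (1 / (1 + a)) * Real.exp (-1) ≤ ∫ x in Ioc (0:ℝ) 1, f x := by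
    rw [← hconst]
    refine setIntegral_mono_on (Iff.mpr integrableOn_const_iff (by right; simp [Real.volume_Ioc]))
      hIoc measurableSet_Ioc ?_
    intro x hx
    have hx0 : (0:ℝ) < x := hx.1
    have hx1 : x ≤ 1 := hx.2
    have hxa : 0 < x + a := by linarith
    have hA : 1 / (1 + a) ≤ 1 / (x + a) := by
      rw [one_div, one_div]; exact inv_anti₀ hxa (by linarith)
    have hB : Real.exp (-1) ≤ Real.exp (-x) := Real.exp_le_exp.mpr (by linarith)
    calc (1 / (1 + a)) * Real.exp (-1) ≤ (1 / (x + a)) * Real.exp (-1) :=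
          mul_le_mul_of_nonneg_right hA (Real.exp_pos _).le
      _ ≤ (1 / (x + a)) * Real.exp (-x) :=
          mul_le_mul_of_nonneg_left hB (by positivity)
  have hsub : (∫ x in Ioc (0:ℝ) 1, f x) ≤ ∫ x in Ioi (0:ℝ), f x := by
    refine setIntegral_mono_set hInt ?_ (HasSubset.Subset.eventuallyLE Ioc_subset_Ioi_self)
    filter_upwards [ae_restrict_mem measurableSet_Ioi] with x hx
    have hx0 : (0:ℝ) < x := hx
    have : 0 < x + a := by linarith
    positivity
  have : 0 < (1 / (1 + a)) * Real.exp (-1) := by positivity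
  linarith

private lemma ray_num_bound (κ : ℝ) (hκ : 1 ≤ κ) :
    Real.logb 2 (2 * Real.log (1 + 2 * κ)) < 1.48 + Real.logb 2 (Real.logb 2 (1 + κ)) := by
  have hl2 : (0:ℝ) < Real.log 2 := Real.log_pos one_lt_two
  have hLpos : (0:ℝ) < Real.logb 2 (1 + κ) := Real.logb_pos one_lt_two (by linarith)
  have hlogb2κpos : 0 < Real.logb 2 (1 + 2 * κ) := Real.logb_pos one_lt_two (by linarith)
  have h2κ : Real.logb 2 (1 + 2 * κ) ≤ 2 * Real.logb 2 (1 + κ) := by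
    have hsq : (1 + 2 * κ) ≤ (1 + κ) ^ 2 := by nlinarith
    calc Real.logb 2 (1 + 2 * κ) ≤ Real.logb 2 ((1 + κ) ^ 2) :=
          Real.logb_le_logb_of_le one_lt_two (by linarith) hsq
      _ = 2 * Real.logb 2 (1 + κ) := by
          rw [Real.logb_pow]; push_cast; ring
  have key : Real.logb 2 (2 * Real.log (1 + 2 * κ))
      = 1 + Real.logb 2 (Real.logb 2 (1 + 2 * κ)) + Real.logb 2 (Real.log 2) := by
    have hlog_eq : Real.log (1 + 2 * κ) = Real.logb 2 (1 + 2 * κ) * Real.log 2 := by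
      rw [Real.logb]; field_simp
    rw [hlog_eq, Real.logb_mul (by norm_num)
        (mul_ne_zero (ne_of_gt hlogb2κpos) (ne_of_gt hl2)),
      Real.logb_mul (ne_of_gt hlogb2κpos) (ne_of_gt hl2),
      Real.logb_self_eq_one one_lt_two]
    ring
  have hstep : Real.logb 2 (Real.logb 2 (1 + 2 * κ))
      ≤ 1 + Real.logb 2 (Real.logb 2 (1 + κ)) := by
    calc Real.logb 2 (Real.logb 2 (1 + 2 * κ))
        ≤ Real.logb 2 (2 * Real.logb 2 (1 + κ)) :=
          Real.logb_le_logb_of_le one_lt_two hlogb2κpos h2κ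
      _ = 1 + Real.logb 2 (Real.logb 2 (1 + κ)) := by
          rw [Real.logb_mul (by norm_num) (ne_of_gt hLpos),
            Real.logb_self_eq_one one_lt_two]
  have hnum : Real.logb 2 (Real.log 2) < -(13 / 25 : ℝ) := by
    have h25 : (Real.log 2) ^ 25 < (1:ℝ) / 8192 := by
      calc (Real.log 2) ^ 25 ≤ (0.6931471808 : ℝ) ^ 25 :=
            pow_le_pow_left₀ hl2.le Real.log_two_lt_d9.le 25
        _ < 1 / 8192 := by norm_num
    have hlt := Real.log_lt_log (by positivity) h25
    rw [Real.log_pow] at hlt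
    have h8192 : Real.log ((1:ℝ) / 8192) = -(13 * Real.log 2) := by
      rw [one_div, Real.log_inv, show (8192:ℝ) = 2 ^ 13 by norm_num, Real.log_pow]
      push_cast; ring
    rw [h8192] at hlt
    rw [Real.logb, div_lt_iff₀ hl2]
    push_cast at hlt
    linarith
  rw [key]
  linarith

/-- Rayleigh-fading gap bound: with `|h|²` exponential of mean 1,
`ρ = Pₓ/P_w ≥ 1` and `κ = max{Pₓ/P_w, Pₛ/P_w, 1}`, the capacity gap satisfies
`log₂((1/ρ + 1)·E[1/(|h|² + 1/(Pₓ/P_w + Pₛ/P_w))]) < 1.48 + log₂(log₂(1 + κ))`. -/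
theorem rayleigh_gap_bound (Px Ps Pw : ℝ)
    (hPx : 0 < Px) (hPs : 0 < Ps) (hPw : 0 < Pw)
    (hρ : 1 ≤ Px / Pw) :
    Real.logb 2 ((1 / (Px / Pw) + 1) *
        ∫ x in Set.Ioi (0 : ℝ),
          (1 / (x + 1 / (Px / Pw + Ps / Pw))) * Real.exp (-x))
      < 1.48 + Real.logb 2 (Real.logb 2 (1 + max (max (Px / Pw) (Ps / Pw)) 1)) := by
  set ρ := Px / Pw with hρdef
  set σ := Ps / Pw with hσdef
  have hσpos : 0 < σ := div_pos hPs hPw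
  set s := ρ + σ with hsdef
  have hs1 : 1 < s := by simp only [hsdef]; linarith
  have hspos : 0 < s := by linarith
  set a := 1 / s with hadef
  have ha : 0 < a := by positivity
  set κ := max (max ρ σ) 1 with hκdef
  have hκ1 : (1:ℝ) ≤ κ := le_max_right _ _
  have hs2κ : s ≤ 2 * κ := by
    have h1 : ρ ≤ κ := le_trans (le_max_left _ _) (le_max_left _ _)
    have h2 : σ ≤ κ := le_trans (le_max_right _ _) (le_max_left _ _)
    simp only [hsdef]; linarith
  set I := ∫ x in Set.Ioi (0:ℝ), (1 / (x + a)) * Real.exp (-x) with hIdef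
  have hIpos : 0 < I := ray_integral_pos a ha
  have hIle : I ≤ Real.log (1 + 2 * κ) := by
    have h1 := ray_integral_le a ha
    have heq : (1 + a) / a = 1 + s := by
      rw [hadef]; field_simp; ring
    rw [heq] at h1
    exact h1.trans (Real.log_le_log (by linarith) (by linarith))
  have hρ2 : 1 / ρ + 1 ≤ 2 := by
    have : 1 / ρ ≤ 1 := by
      rw [div_le_one (by linarith)]; linarith
    linarith
  have hρpos : 0 < 1 / ρ + 1 := by positivity
  have hlogpos : 0 < Real.log (1 + 2 * κ) := Real.log_pos (by linarith)
  have hP : (1 / ρ + 1) * I ≤ 2 * Real.log (1 + 2 * κ) :=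
    mul_le_mul hρ2 hIle hIpos.le (by norm_num)
  have hPpos : 0 < (1 / ρ + 1) * I := mul_pos hρpos hIpos
  calc Real.logb 2 ((1 / ρ + 1) * I)
      ≤ Real.logb 2 (2 * Real.log (1 + 2 * κ)) :=
        Real.logb_le_logb_of_le one_lt_two hPpos hP
    _ < 1.48 + Real.logb 2 (Real.logb 2 (1 + κ)) := ray_num_bound κ hκ1
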